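/- Let $p \in (1, \infty)$ and let $\rho_0, \rho_1, \mu_0, \mu_1$ be probability measures on $\mathbb{R}^d$ with finite $p$-th moments. Let $\gamma_0 \in \Pi(\rho_0, \mu_0)$ and $\gamma_1 \in \Pi(\rho_1, \mu_1)$ be any couplings (in particular optimal transport plans). Then $W_p^p(\gamma_0, \gamma_1) \geq c_p (W_p^p(\rho_0, \rho_1) + W_p^p(\mu_0, \mu_1))$, where $c_p = \min(1, 2^{p/2 - 1})$ and the Wasserstein distance between $\gamma_0, \gamma_1$ is taken for the Euclidean distance on $\mathbb{R}^d \times \mathbb{R}^d$. -/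

import Mathlib

open MeasureTheory ENNReal NNReal

/-- The infimum of the `cost`-transport cost over all couplings of `μ` and `ν`. -/
noncomputable def Wpow {α : Type*} [MeasurableSpace α]
    (cost : α → α → ℝ) (μ ν : Measure α) : ℝ≥0∞ :=
  ⨅ γ ∈ {γ : Measure (α × α) | γ.fst = μ ∧ γ.snd = ν},
    ∫⁻ q, ENNReal.ofReal (cost q.1 q.2) ∂γ

lemma nn_concave {r : ℝ} (hr0 : 0 < r) (hr1 : r ≤ 1) (a b : ℝ≥0) :
    (2 : ℝ≥0) ^ (r - 1) * (a ^ r + b ^ r) ≤ (a + b) ^ r := by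
  have hinv : 1 ≤ 1 / r := one_le_one_div hr0 hr1
  have h1 := NNReal.rpow_arith_mean_le_arith_mean2_rpow (1/2) (1/2) (a ^ r) (b ^ r)
    (add_halves 1) hinv
  have ha : (a ^ r) ^ (1/r) = a := by
    rw [← NNReal.rpow_mul, mul_one_div, div_self hr0.ne', NNReal.rpow_one]
  have hb : (b ^ r) ^ (1/r) = b := by
    rw [← NNReal.rpow_mul, mul_one_div, div_self hr0.ne', NNReal.rpow_one]
  rw [ha, hb] at h1
  have h2 := NNReal.rpow_le_rpow h1 hr0.le
  rw [← NNReal.rpow_mul, one_div_mul_cancel hr0.ne', NNReal.rpow_one] at h2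
  have h3 : ((1/2 : ℝ≥0) * a + 1/2 * b) ^ r = (1/2 : ℝ≥0) ^ r * (a + b) ^ r := by
    rw [← mul_add, NNReal.mul_rpow]
  rw [h3] at h2
  have h4 : (2 : ℝ≥0) ^ (r - 1) * (a ^ r + b ^ r)
      = 2 ^ r * ((1/2 : ℝ≥0) * a ^ r + 1/2 * b ^ r) := by
    rw [NNReal.rpow_sub two_ne_zero, NNReal.rpow_one, div_eq_mul_inv, mul_assoc, mul_add]
    norm_num
  rw [h4]
  calc (2:ℝ≥0) ^ r * ((1/2 : ℝ≥0) * a ^ r + 1/2 * b ^ r)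
      ≤ 2 ^ r * ((1/2 : ℝ≥0) ^ r * (a + b) ^ r) := mul_le_mul_right h2 _
    _ = ((2 : ℝ≥0) * (1/2)) ^ r * (a + b) ^ r := by rw [NNReal.mul_rpow, mul_assoc]
    _ = (a + b) ^ r := by norm_num

lemma nn_main {r : ℝ} (hr0 : 0 < r) (a b : ℝ≥0) :
    min 1 ((2 : ℝ≥0) ^ (r - 1)) * (a ^ r + b ^ r) ≤ (a + b) ^ r := by
  rcases le_total 1 r with h | h
  · calc min 1 ((2:ℝ≥0) ^ (r-1)) * (a ^ r + b ^ r) ≤ 1 * (a ^ r + b ^ r) :=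
        mul_le_mul_left (min_le_left _ _) _
      _ = a ^ r + b ^ r := one_mul _
      _ ≤ (a + b) ^ r := NNReal.add_rpow_le_rpow_add a b h
  · calc min 1 ((2:ℝ≥0) ^ (r-1)) * (a ^ r + b ^ r) ≤ 2 ^ (r-1) * (a ^ r + b ^ r) :=
        mul_le_mul_left (min_le_right _ _) _
      _ ≤ (a + b) ^ r := nn_concave hr0 h a b

lemma key_real {p : ℝ} (hp : 1 < p) {x y : ℝ} (hx : 0 ≤ x) (hy : 0 ≤ y) :
    min 1 (2 ^ (p/2 - 1)) * (x ^ p + y ^ p) ≤ (x ^ 2 + y ^ 2) ^ (p/2) := by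
  lift x to ℝ≥0 using hx
  lift y to ℝ≥0 using hy
  have hx2 : (x : ℝ) ^ p = ((x ^ 2 : ℝ≥0) : ℝ) ^ (p/2) := by
    push_cast
    rw [← Real.rpow_natCast (x:ℝ) 2, ← Real.rpow_mul x.coe_nonneg]
    norm_num
    rw [mul_div_cancel₀ _ (two_ne_zero)]
  have hy2 : (y : ℝ) ^ p = ((y ^ 2 : ℝ≥0) : ℝ) ^ (p/2) := by
    push_cast
    rw [← Real.rpow_natCast (y:ℝ) 2, ← Real.rpow_mul y.coe_nonneg]
    norm_num
    rw [mul_div_cancel₀ _ (two_ne_zero)]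
  rw [hx2, hy2]
  have := nn_main (r := p/2) (by linarith) (x ^ 2) (y ^ 2)
  have h2 : ((2:ℝ≥0):ℝ) = 2 := by norm_num
  calc min 1 ((2:ℝ) ^ (p/2 - 1)) * (((x^2 : ℝ≥0):ℝ) ^ (p/2) + ((y^2 : ℝ≥0):ℝ) ^ (p/2))
      = ((min 1 ((2:ℝ≥0) ^ (p/2-1)) * ((x^2) ^ (p/2) + (y^2) ^ (p/2)) : ℝ≥0) : ℝ) := by
        push_cast [NNReal.coe_rpow]
        norm_num
    _ ≤ (((x^2 + y^2 : ℝ≥0) ^ (p/2) : ℝ≥0) : ℝ) := by exact_mod_cast this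
    _ = ((x:ℝ)^2 + (y:ℝ)^2) ^ (p/2) := by push_cast [NNReal.coe_rpow]; ring_nf

set_option maxHeartbeats 2000000 in
/-- Reverse stability of transport plans: for any couplings `γ₀ ∈ Π(ρ₀, μ₀)`,
`γ₁ ∈ Π(ρ₁, μ₁)`, one has
`W_p^p(γ₀, γ₁) ≥ c_p (W_p^p(ρ₀, ρ₁) + W_p^p(μ₀, μ₁))` with `c_p = min 1 (2^(p/2-1))`,
the Wasserstein distance between plans being taken for the Euclidean distance on the product. -/
theorem reverse_stability_of_plans {d : ℕ} (p : ℝ) (hp : 1 < p)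
    (ρ₀ ρ₁ μ₀ μ₁ : Measure (EuclideanSpace ℝ (Fin d)))
    [IsProbabilityMeasure ρ₀] [IsProbabilityMeasure ρ₁]
    [IsProbabilityMeasure μ₀] [IsProbabilityMeasure μ₁]
    (hmρ₀ : ∫⁻ x, ENNReal.ofReal (‖x‖ ^ p) ∂ρ₀ < ⊤)
    (hmρ₁ : ∫⁻ x, ENNReal.ofReal (‖x‖ ^ p) ∂ρ₁ < ⊤)
    (hmμ₀ : ∫⁻ x, ENNReal.ofReal (‖x‖ ^ p) ∂μ₀ < ⊤)
    (hmμ₁ : ∫⁻ x, ENNReal.ofReal (‖x‖ ^ p) ∂μ₁ < ⊤)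
    (γ₀ γ₁ : Measure (EuclideanSpace ℝ (Fin d) × EuclideanSpace ℝ (Fin d)))
    (hγ₀f : γ₀.fst = ρ₀) (hγ₀s : γ₀.snd = μ₀)
    (hγ₁f : γ₁.fst = ρ₁) (hγ₁s : γ₁.snd = μ₁) :
    ENNReal.ofReal (min 1 (2 ^ (p / 2 - 1))) *
        (Wpow (fun x y => dist x y ^ p) ρ₀ ρ₁ + Wpow (fun x y => dist x y ^ p) μ₀ μ₁)
      ≤ Wpow (fun a b => (dist a.1 b.1 ^ 2 + dist a.2 b.2 ^ 2) ^ (p / 2)) γ₀ γ₁ := by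
  set E := EuclideanSpace ℝ (Fin d)
  haveI : OpensMeasurableSpace ((E × E) × E × E) :=
    Prod.opensMeasurableSpace
  set f : (E × E) × (E × E) → E × E := fun q => (q.1.1, q.2.1) with hfdef
  set g : (E × E) × (E × E) → E × E := fun q => (q.1.2, q.2.2) with hgdef
  have hf : Measurable f := (measurable_fst.fst).prodMk (measurable_snd.fst)
  have hg : Measurable g := (measurable_fst.snd).prodMk (measurable_snd.snd)
  have hcont : Continuous fun x : E × E => ENNReal.ofReal (dist x.1 x.2 ^ p) :=
    ENNReal.continuous_ofReal.comp
      ((continuous_fst.dist continuous_snd).rpow_const fun x => Or.inr (by positivity))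
  have hmeas : Measurable fun x : E × E => ENNReal.ofReal (dist x.1 x.2 ^ p) := hcont.measurable
  rw [show Wpow (fun a b : E × E => (dist a.1 b.1 ^ 2 + dist a.2 b.2 ^ 2) ^ (p / 2)) γ₀ γ₁ =
      ⨅ Γ ∈ {Γ : Measure ((E × E) × (E × E)) | Γ.fst = γ₀ ∧ Γ.snd = γ₁},
        ∫⁻ q, ENNReal.ofReal ((dist q.1.1 q.2.1 ^ 2 + dist q.1.2 q.2.2 ^ 2) ^ (p / 2)) ∂Γ
    from rfl]
  refine le_iInf fun Γ => le_iInf fun hΓ => ?_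
  obtain ⟨hΓf, hΓs⟩ := hΓ
  have hW1 : Wpow (fun x y : E => dist x y ^ p) ρ₀ ρ₁
      ≤ ∫⁻ q, ENNReal.ofReal (dist q.1.1 q.2.1 ^ p) ∂Γ := by
    have hm1 : (Γ.map f).fst = ρ₀ := by
      show ((Γ.map f).map Prod.fst) = ρ₀
      rw [Measure.map_map measurable_fst hf,
        show (Prod.fst ∘ f) = (Prod.fst ∘ (Prod.fst : (E × E) × (E × E) → E × E)) from rfl,
        ← Measure.map_map measurable_fst measurable_fst]
      show Γ.fst.fst = ρ₀
      rw [hΓf, hγ₀f]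
    have hm2 : (Γ.map f).snd = ρ₁ := by
      show ((Γ.map f).map Prod.snd) = ρ₁
      rw [Measure.map_map measurable_snd hf,
        show (Prod.snd ∘ f) = (Prod.fst ∘ (Prod.snd : (E × E) × (E × E) → E × E)) from rfl,
        ← Measure.map_map measurable_fst measurable_snd]
      show Γ.snd.fst = ρ₁
      rw [hΓs, hγ₁f]
    refine le_trans (iInf₂_le (Γ.map f) ⟨hm1, hm2⟩) ?_
    rw [lintegral_map hmeas hf]
  have hW2 : Wpow (fun x y : E => dist x y ^ p) μ₀ μ₁
      ≤ ∫⁻ q, ENNReal.ofReal (dist q.1.2 q.2.2 ^ p) ∂Γ := by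
    have hm1 : (Γ.map g).fst = μ₀ := by
      show ((Γ.map g).map Prod.fst) = μ₀
      rw [Measure.map_map measurable_fst hg,
        show (Prod.fst ∘ g) = (Prod.snd ∘ (Prod.fst : (E × E) × (E × E) → E × E)) from rfl,
        ← Measure.map_map measurable_snd measurable_fst]
      show Γ.fst.snd = μ₀
      rw [hΓf, hγ₀s]
    have hm2 : (Γ.map g).snd = μ₁ := by
      show ((Γ.map g).map Prod.snd) = μ₁
      rw [Measure.map_map measurable_snd hg,
        show (Prod.snd ∘ g) = (Prod.snd ∘ (Prod.snd : (E × E) × (E × E) → E × E)) from rfl,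
        ← Measure.map_map measurable_snd measurable_snd]
      show Γ.snd.snd = μ₁
      rw [hΓs, hγ₁s]
    refine le_trans (iInf₂_le (Γ.map g) ⟨hm1, hm2⟩) ?_
    rw [lintegral_map hmeas hg]
  calc ENNReal.ofReal (min 1 (2 ^ (p / 2 - 1))) *
        (Wpow (fun x y : E => dist x y ^ p) ρ₀ ρ₁ + Wpow (fun x y : E => dist x y ^ p) μ₀ μ₁)
      ≤ ENNReal.ofReal (min 1 (2 ^ (p / 2 - 1))) *
        ((∫⁻ q, ENNReal.ofReal (dist q.1.1 q.2.1 ^ p) ∂Γ) +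
         (∫⁻ q, ENNReal.ofReal (dist q.1.2 q.2.2 ^ p) ∂Γ)) :=
        mul_le_mul_right (add_le_add hW1 hW2) _
    _ = ∫⁻ q, ENNReal.ofReal (min 1 (2 ^ (p / 2 - 1))) *
          (ENNReal.ofReal (dist q.1.1 q.2.1 ^ p) + ENNReal.ofReal (dist q.1.2 q.2.2 ^ p)) ∂Γ := by
        have h1 : Measurable fun q : (E × E) × (E × E) =>
            ENNReal.ofReal (dist q.1.1 q.2.1 ^ p) :=
          (ENNReal.continuous_ofReal.comp
            (((continuous_fst.fst.dist continuous_snd.fst)).rpow_const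
              fun x => Or.inr (by positivity))).measurable
        have h2 : Measurable fun q : (E × E) × (E × E) =>
            ENNReal.ofReal (dist q.1.2 q.2.2 ^ p) :=
          (ENNReal.continuous_ofReal.comp
            (((continuous_fst.snd.dist continuous_snd.snd)).rpow_const
              fun x => Or.inr (by positivity))).measurable
        rw [lintegral_const_mul (f := fun q : (E × E) × (E × E) =>
            ENNReal.ofReal (dist q.1.1 q.2.1 ^ p) + ENNReal.ofReal (dist q.1.2 q.2.2 ^ p)) _ (h1.add h2),
          lintegral_add_left h1]
    _ ≤ ∫⁻ q, ENNReal.ofReal ((dist q.1.1 q.2.1 ^ 2 + dist q.1.2 q.2.2 ^ 2) ^ (p / 2)) ∂Γ := by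
        refine lintegral_mono fun q => ?_
        have hd1 : (0:ℝ) ≤ dist q.1.1 q.2.1 := dist_nonneg
        have hd2 : (0:ℝ) ≤ dist q.1.2 q.2.2 := dist_nonneg
        rw [← ENNReal.ofReal_add (by positivity) (by positivity),
          ← ENNReal.ofReal_mul (by positivity)]
        exact ENNReal.ofReal_le_ofReal (key_real hp hd1 hd2)
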